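/- Let p, q be two demographic groups with node sets U_p, U_q. Suppose each node u has an embedding vector h_u of Euclidean norm at most 1. Suppose all nodes in U_p with an inter-group edge share a common embedding h̄, and likewise all nodes in U_q with an inter-group edge share the same h̄, where ‖h̄‖₂ ≤ 1. Let β_p = (fraction of nodes in U_p with at least one inter-group edge) and β_q similarly. Then the Euclidean norm of the difference of group mean embeddings satisfies ‖μ_p − μ_q‖₂ ≤ 2(1 − min(β_p, β_q)). -/

import Mathlib

lemma mean_dev_bound {V : Type*} [DecidableEq V] {d : ℕ}
    (h : V → EuclideanSpace ℝ (Fin d)) (hbar : EuclideanSpace ℝ (Fin d))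
    (U S : Finset V) (hU : U.Nonempty) (hS : S ⊆ U)
    (hnorm : ∀ u, ‖h u‖ ≤ 1)
    (hval : ∀ u ∈ S, h u = hbar) :
    ‖((U.card : ℝ))⁻¹ • ∑ u ∈ U, h u - ((S.card : ℝ) / (U.card : ℝ)) • hbar‖
      ≤ 1 - (S.card : ℝ) / (U.card : ℝ) := by
  have hn : (0 : ℝ) < (U.card : ℝ) := by
    exact_mod_cast Finset.card_pos.mpr hU
  have hsplit : ∑ u ∈ U, h u = (S.card : ℝ) • hbar + ∑ u ∈ U \ S, h u := by
    rw [← Finset.sum_sdiff hS, Finset.sum_congr rfl hval, Finset.sum_const,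
      add_comm, ← Nat.cast_smul_eq_nsmul ℝ]
  have key : ((U.card : ℝ))⁻¹ • ∑ u ∈ U, h u - ((S.card : ℝ) / (U.card : ℝ)) • hbar
      = ((U.card : ℝ))⁻¹ • ∑ u ∈ U \ S, h u := by
    rw [hsplit, smul_add, div_eq_inv_mul, mul_smul]
    abel
  rw [key, norm_smul]
  have hb : ‖∑ u ∈ U \ S, h u‖ ≤ ((U \ S).card : ℝ) := by
    calc ‖∑ u ∈ U \ S, h u‖ ≤ ∑ u ∈ U \ S, ‖h u‖ := norm_sum_le _ _
    _ ≤ ∑ u ∈ U \ S, (1 : ℝ) := Finset.sum_le_sum fun u _ => hnorm u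
    _ = ((U \ S).card : ℝ) := by simp
  have hcard : ((U \ S).card : ℝ) = (U.card : ℝ) - (S.card : ℝ) := by
    rw [Finset.card_sdiff_of_subset hS, Nat.cast_sub (Finset.card_le_card hS)]
  have : ‖((U.card : ℝ))⁻¹‖ * ‖∑ u ∈ U \ S, h u‖
      ≤ ((U.card : ℝ))⁻¹ * ((U.card : ℝ) - (S.card : ℝ)) := by
    rw [hcard] at hb
    rw [Real.norm_eq_abs, abs_of_pos (inv_pos.mpr hn)]
    exact mul_le_mul_of_nonneg_left hb (le_of_lt (inv_pos.mpr hn))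
  refine this.trans ?_
  rw [mul_sub, inv_mul_cancel₀ (ne_of_gt hn), ← div_eq_inv_mul]

/-- Fairness bound (Theorem 4.1): if all nodes with inter-group edges share a common
embedding `hbar` (of norm at most 1), and all embeddings have norm at most 1, then the
group-mean embeddings differ by at most `2 * (1 - min β_p β_q)`. -/
theorem fairness_mean_embedding_bound
    {V : Type*} [DecidableEq V] {d : ℕ}
    (h : V → EuclideanSpace ℝ (Fin d)) (hbar : EuclideanSpace ℝ (Fin d))
    (Up Uq Sp Sq : Finset V)
    (hUp : Up.Nonempty) (hUq : Uq.Nonempty)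
    (hSp : Sp ⊆ Up) (hSq : Sq ⊆ Uq)
    (hnorm : ∀ u, ‖h u‖ ≤ 1) (hbarnorm : ‖hbar‖ ≤ 1)
    (hSpval : ∀ u ∈ Sp, h u = hbar) (hSqval : ∀ u ∈ Sq, h u = hbar)
    (βp βq : ℝ)
    (hβp : βp = (Sp.card : ℝ) / (Up.card : ℝ))
    (hβq : βq = (Sq.card : ℝ) / (Uq.card : ℝ))
    (μp μq : EuclideanSpace ℝ (Fin d))
    (hμp : μp = ((Up.card : ℝ))⁻¹ • ∑ u ∈ Up, h u)
    (hμq : μq = ((Uq.card : ℝ))⁻¹ • ∑ u ∈ Uq, h u) :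
    ‖μp - μq‖ ≤ 2 * (1 - min βp βq) := by
  have hp := mean_dev_bound h hbar Up Sp hUp hSp hnorm hSpval
  have hq := mean_dev_bound h hbar Uq Sq hUq hSq hnorm hSqval
  rw [← hβp, ← hμp] at hp
  rw [← hβq, ← hμq] at hq
  have hdecomp : μp - μq = (μp - βp • hbar) - (μq - βq • hbar) + (βp - βq) • hbar := by
    rw [sub_smul]; abel
  have hbound : ‖μp - μq‖ ≤ (1 - βp) + (1 - βq) + |βp - βq| := by
    rw [hdecomp]
    refine (norm_add_le _ _).trans ?_
    gcongr
    · exact (norm_sub_le _ _).trans (by gcongr)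
    · rw [norm_smul, Real.norm_eq_abs]
      calc |βp - βq| * ‖hbar‖ ≤ |βp - βq| * 1 := by
            exact mul_le_mul_of_nonneg_left hbarnorm (abs_nonneg _)
      _ = |βp - βq| := mul_one _
  refine hbound.trans ?_
  rcases le_total βp βq with hle | hle
  · rw [abs_of_nonpos (by linarith), min_eq_left hle]; linarith
  · rw [abs_of_nonneg (by linarith), min_eq_right hle]; linarith
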